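/- Fix γ ∈ ℝ and define f(R) := (1 − γ/R)·(R·coth R − 1)/R² for R > 0. Then for every R > 0, f'(R) = −(1/R²)·[γ·(h_0(R) + j_0(R)) − j_0(R)·R]; consequently, for μ, σ̄ > 0, the eigenvalue Λ_0(γ) := (μσ̄/R)·[γ·(h_0(R) + j_0(R)) − j_0(R)·R] satisfies Λ_0(γ) = −μσ̄·R·f'(R). -/

import Mathlib

/-- The modified Bessel function of the first kind of order `m`:
`I_m(r) = ∑ (r/2)^(m+2n) / (n! Γ(m+n+1))`. -/
noncomputable def besselI (m r : ℝ) : ℝ :=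
  ∑' n : ℕ, (r / 2) ^ (m + 2 * (n : ℝ)) / ((n.factorial : ℝ) * Real.Gamma (m + (n : ℝ) + 1))

/-- `h_k(R) = ((k²+k)/2 - 1)·I_{k+3/2}(R)/(R·I_{k+1/2}(R))`. -/
noncomputable def hfun (k : ℕ) (R : ℝ) : ℝ :=
  (((k : ℝ) ^ 2 + k) / 2 - 1) * (besselI ((k : ℝ) + 3 / 2) R / (R * besselI ((k : ℝ) + 1 / 2) R))

/-- `j_k(R) = 1 - 3 I_{3/2}(R)/(R I_{1/2}(R)) - I_{3/2}(R) I_{k+3/2}(R)/(I_{1/2}(R) I_{k+1/2}(R))`. -/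
noncomputable def jfun (k : ℕ) (R : ℝ) : ℝ :=
  1 - 3 * besselI (3 / 2) R / (R * besselI (1 / 2) R)
    - besselI (3 / 2) R * besselI ((k : ℝ) + 3 / 2) R
      / (besselI (1 / 2) R * besselI ((k : ℝ) + 1 / 2) R)

/-- The stationary radius function `f(R) = (1 - γ/R)·(R·coth R - 1)/R²`. -/
noncomputable def statf (γ R : ℝ) : ℝ :=
  (1 - γ / R) * (R * (Real.cosh R / Real.sinh R) - 1) / R ^ 2

open Real in
lemma gam_half : ∀ n : ℕ, Real.Gamma ((n:ℝ) + 1/2)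
    = (Nat.factorial (2*n)) * Real.sqrt π / (4^n * Nat.factorial n) := by
  intro n
  induction n with
  | zero => norm_num [Real.Gamma_one_half_eq]
  | succ n ih =>
    have hne : ((n:ℝ) + 1/2) ≠ 0 := by positivity
    have h1 : ((n:ℝ)+1) + 1/2 = ((n:ℝ)+1/2) + 1 := by ring
    rw [Nat.cast_succ, h1, Real.Gamma_add_one hne, ih]
    have e1 : ((Nat.factorial (2*(n+1)) : ℕ) : ℝ)
        = (2*(n:ℝ)+2)*(2*(n:ℝ)+1)*(Nat.factorial (2*n)) := by
      have : 2*(n+1) = (2*n+1)+1 := by ring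
      rw [this, Nat.factorial_succ, Nat.factorial_succ]
      push_cast; ring
    have e2 : ((Nat.factorial (n+1) : ℕ) : ℝ) = ((n:ℝ)+1)*(Nat.factorial n) := by
      rw [Nat.factorial_succ]; push_cast; ring
    rw [e1, e2]
    have hfac : (Nat.factorial n : ℝ) ≠ 0 := by positivity
    have h4n : (4:ℝ)^n ≠ 0 := by positivity
    have hn1 : ((n:ℝ)+1) ≠ 0 := by positivity
    rw [pow_succ]
    field_simp
    ring

open Real in
lemma besselI_half (R : ℝ) (hR : 0 < R) :
    besselI (1/2) R = (R/2)^((1:ℝ)/2) * (2/Real.sqrt π) * (Real.sinh R / R) := by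
  have hs : HasSum (fun n : ℕ => R^(2*n)/(Nat.factorial (2*n+1))) (Real.sinh R / R) := by
    have h := (Real.hasSum_sinh R).div_const R
    convert h using 2 with n
    · rfl
    rw [pow_succ]
    field_simp
  have hpos : (0:ℝ) < R/2 := by linarith
  have key : ∀ n : ℕ, (R/2) ^ ((1:ℝ)/2 + 2*(n:ℝ)) / ((Nat.factorial n : ℝ) * Real.Gamma (1/2 + (n:ℝ) + 1))
      = ((R/2)^((1:ℝ)/2) * (2/Real.sqrt π)) * (R^(2*n)/(Nat.factorial (2*n+1))) := by
    intro n
    have hg : (1:ℝ)/2 + (n:ℝ) + 1 = (((n+1:ℕ)):ℝ) + 1/2 := by push_cast; ring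
    rw [hg, gam_half]
    rw [Real.rpow_add hpos, show (2*(n:ℝ)) = ((2*n : ℕ):ℝ) by push_cast; ring,
      Real.rpow_natCast]
    have e1 : ((Nat.factorial (2*(n+1)) : ℕ) : ℝ)
        = (2*(n:ℝ)+2)*(Nat.factorial (2*n+1)) := by
      have h2 : 2*(n+1) = (2*n+1)+1 := by ring
      rw [h2, Nat.factorial_succ]; push_cast; ring
    have e2 : ((Nat.factorial (n+1) : ℕ) : ℝ) = ((n:ℝ)+1)*(Nat.factorial n) := by
      rw [Nat.factorial_succ]; push_cast; ring
    rw [e1, e2, div_pow, show (2:ℝ)^(2*n) = 4^n by rw [pow_mul]; norm_num,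
      pow_succ]
    have h0 : (Nat.factorial n : ℝ) ≠ 0 := by positivity
    have h1 : (Nat.factorial (2*n+1) : ℝ) ≠ 0 := by positivity
    have h2 : (4:ℝ)^n ≠ 0 := by positivity
    have h3 : Real.sqrt π ≠ 0 := by positivity
    have h4 : ((n:ℝ)+1) ≠ 0 := by positivity
    have h5 : (R/2)^((1:ℝ)/2) ≠ 0 := by positivity
    field_simp
    ring
  rw [besselI, tsum_congr key, (hs.mul_left _).tsum_eq, mul_assoc]

open Real in
lemma besselI_threehalf (R : ℝ) (hR : 0 < R) :
    besselI (3/2) R = (R/2)^((1:ℝ)/2) * (R/2) * (4/Real.sqrt π)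
      * ((Real.cosh R - Real.sinh R / R)/R^2) := by
  have hpos : (0:ℝ) < R/2 := by linarith
  have hsinh : HasSum (fun n : ℕ => R^(2*n)/(Nat.factorial (2*n+1))) (Real.sinh R / R) := by
    have h := (Real.hasSum_sinh R).div_const R
    convert h using 2 with n
    · rfl
    rw [pow_succ]; field_simp
  have h1 : HasSum (fun n : ℕ => (2*(n:ℝ))*R^(2*n)/(Nat.factorial (2*n+1)))
      (Real.cosh R - Real.sinh R / R) := by
    have h := (Real.hasSum_cosh R).sub hsinh
    convert h using 2 with n
    · rfl
    have e : ((Nat.factorial (2*n+1) : ℕ) : ℝ) = (2*(n:ℝ)+1)*(Nat.factorial (2*n)) := by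
      rw [Nat.factorial_succ]; push_cast; ring
    rw [e]
    have h0 : (Nat.factorial (2*n) : ℝ) ≠ 0 := by positivity
    have h0' : (2*(n:ℝ)+1) ≠ 0 := by positivity
    field_simp
    ring
  have h2 : HasSum (fun n : ℕ => (2*(n:ℝ)+2)*R^(2*n+2)/(Nat.factorial (2*n+3)))
      (Real.cosh R - Real.sinh R / R) := by
    have h := (hasSum_nat_add_iff' (f := fun n : ℕ => (2*(n:ℝ))*R^(2*n)/(Nat.factorial (2*n+1))) 1).mpr h1
    simp only [Finset.range_one, Finset.sum_singleton, Nat.cast_zero] at h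
    norm_num at h
    convert h using 2 with n
    · rfl
    ring_nf
  have h3 : HasSum (fun n : ℕ => (2*(n:ℝ)+2)*R^(2*n+2)/(Nat.factorial (2*n+3))/R^2)
      ((Real.cosh R - Real.sinh R / R)/R^2) := h2.div_const _
  have key : ∀ n : ℕ, (R/2) ^ ((3:ℝ)/2 + 2*(n:ℝ)) / ((Nat.factorial n : ℝ) * Real.Gamma (3/2 + (n:ℝ) + 1))
      = ((R/2)^((1:ℝ)/2) * (R/2) * (4/Real.sqrt π))
        * ((2*(n:ℝ)+2)*R^(2*n+2)/(Nat.factorial (2*n+3))/R^2) := by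
    intro n
    have hg : (3:ℝ)/2 + (n:ℝ) + 1 = (((n+2:ℕ)):ℝ) + 1/2 := by push_cast; ring
    rw [hg, gam_half]
    rw [Real.rpow_add hpos, show (2*(n:ℝ)) = ((2*n : ℕ):ℝ) by push_cast; ring,
      Real.rpow_natCast,
      show ((3:ℝ)/2) = 1/2 + 1 by norm_num, Real.rpow_add hpos, Real.rpow_one]
    have e1 : ((Nat.factorial (2*(n+2)) : ℕ) : ℝ)
        = (2*(n:ℝ)+4)*(Nat.factorial (2*n+3)) := by
      have h2' : 2*(n+2) = (2*n+3)+1 := by ring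
      rw [h2', Nat.factorial_succ]; push_cast; ring
    have e2 : ((Nat.factorial (n+2) : ℕ) : ℝ) = ((n:ℝ)+2)*((n:ℝ)+1)*(Nat.factorial n) := by
      rw [show n+2 = (n+1)+1 by ring, Nat.factorial_succ, Nat.factorial_succ]; push_cast; ring
    rw [e1, e2, div_pow, show (2:ℝ)^(2*n) = 4^n by rw [pow_mul]; norm_num,
      show n+2 = (n+1)+1 by ring, pow_succ, pow_succ]
    have h0 : (Nat.factorial n : ℝ) ≠ 0 := by positivity
    have hf1 : (Nat.factorial (2*n+3) : ℝ) ≠ 0 := by positivity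
    have hf2 : (4:ℝ)^n ≠ 0 := by positivity
    have hf3 : Real.sqrt π ≠ 0 := by positivity
    have hf4 : ((n:ℝ)+1) ≠ 0 := by positivity
    have hf5 : ((n:ℝ)+2) ≠ 0 := by positivity
    have hf6 : (R/2)^((1:ℝ)/2) ≠ 0 := by positivity
    have hf7 : (2*(n:ℝ)+4) ≠ 0 := by positivity
    have hR' : R ≠ 0 := ne_of_gt hR
    field_simp
    push_cast
    ring
  rw [besselI, tsum_congr key, (h3.mul_left _).tsum_eq]

/-- `f'(R) = -(1/R²)[γ(h_0(R)+j_0(R)) - j_0(R)R]`; consequently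
`Λ_0(γ) = (μσ̄/R)[γ(h_0+j_0) - j_0 R] = -μσ̄·R·f'(R)`. -/
theorem stmt15 (γ R μ σb : ℝ) (hR : 0 < R) (hμ : 0 < μ) (hσb : 0 < σb) :
    deriv (statf γ) R = -(1 / R ^ 2) * (γ * (hfun 0 R + jfun 0 R) - jfun 0 R * R) ∧
    (μ * σb / R) * (γ * (hfun 0 R + jfun 0 R) - jfun 0 R * R)
      = -μ * σb * R * deriv (statf γ) R := by
  have hR0 : R ≠ 0 := ne_of_gt hR
  have hs0 : Real.sinh R ≠ 0 := ne_of_gt (by positivity)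
  have d1 : HasDerivAt (fun x:ℝ => 1 - γ/x) (γ / R^2) R := by
    have h := ((hasDerivAt_inv hR0).const_mul γ).const_sub 1
    simpa [div_eq_mul_inv, neg_mul] using h
  have hq : HasDerivAt (fun x => Real.cosh x / Real.sinh x)
      ((Real.sinh R * Real.sinh R - Real.cosh R * Real.cosh R) / Real.sinh R ^ 2) R :=
    (Real.hasDerivAt_cosh R).div (Real.hasDerivAt_sinh R) hs0
  have hm : HasDerivAt (fun x => x * (Real.cosh x / Real.sinh x) - 1)
      (1 * (Real.cosh R / Real.sinh R) +
        R * ((Real.sinh R * Real.sinh R - Real.cosh R * Real.cosh R) / Real.sinh R ^ 2)) R :=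
    ((hasDerivAt_id R).mul hq).sub_const 1
  have hall := (d1.mul hm).div (hasDerivAt_pow 2 R) (pow_ne_zero 2 hR0)
  have hst : statf γ = fun x => (1 - γ/x) * (x * (Real.cosh x / Real.sinh x) - 1) / x^2 := rfl
  have hd : deriv (statf γ) R =
      ((γ / R ^ 2 * (R * (Real.cosh R / Real.sinh R) - 1) +
          (1 - γ / R) * (1 * (Real.cosh R / Real.sinh R) +
            R * ((Real.sinh R * Real.sinh R - Real.cosh R * Real.cosh R) / Real.sinh R ^ 2))) *
          R ^ 2 -
        (1 - γ / R) * (R * (Real.cosh R / Real.sinh R) - 1) * ((2:ℕ) * R ^ (2 - 1))) /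
      (R ^ 2) ^ 2 := by
    rw [hst]; exact hall.deriv
  have hA : (R/2)^((1:ℝ)/2) ≠ 0 := by positivity
  have hpi : Real.sqrt Real.pi ≠ 0 := by positivity
  have hmain : deriv (statf γ) R
      = -(1 / R ^ 2) * (γ * (hfun 0 R + jfun 0 R) - jfun 0 R * R) := by
    rw [hd]
    simp only [hfun, jfun, Nat.cast_zero, zero_add, ne_eq]
    norm_num
    rw [besselI_half R hR, besselI_threehalf R hR]
    field_simp
    ring
  refine ⟨hmain, ?_⟩
  rw [hmain]
  field_simp
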